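/- If c₀ = a₁b₀ − a₀b₁ < 0, c₁ = a₂b₀ − a₀b₂ ≤ 0, and c₂ = a₂b₁ − a₁b₂ ≤ 0, with the denominator positive on [0, R], then f(r) = (a₀+a₁r+a₂r²)/(b₀+b₁r+b₂r²) is strictly decreasing on [0, R], so the optimal amplification gain is r = 0 (repeater off). -/
import Mathlib


/-- If `c₀ < 0`, `c₁ ≤ 0`, `c₂ ≤ 0`, the SINR is strictly decreasing on
`[0, R]`, so the optimal amplification gain is `r = 0` (repeater off). -/
theorem stmt_9 (a₀ a₁ a₂ b₀ b₁ b₂ R : ℝ) (hR : 0 < R)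
    (hden : ∀ r ∈ Set.Icc (0 : ℝ) R, 0 < b₀ + b₁ * r + b₂ * r ^ 2)
    (hc₀ : a₁ * b₀ - a₀ * b₁ < 0) (hc₁ : a₂ * b₀ - a₀ * b₂ ≤ 0)
    (hc₂ : a₂ * b₁ - a₁ * b₂ ≤ 0)
    (f : ℝ → ℝ)
    (hf : ∀ r, f r = (a₀ + a₁ * r + a₂ * r ^ 2) / (b₀ + b₁ * r + b₂ * r ^ 2)) :
    StrictAntiOn f (Set.Icc 0 R) ∧ ∀ x ∈ Set.Icc (0 : ℝ) R, f x ≤ f 0 := by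
  have hanti : StrictAntiOn f (Set.Icc 0 R) := by
    intro x hx y hy hxy
    have hdx := hden x hx
    have hdy := hden y hy
    rw [hf, hf, div_lt_div_iff₀ hdy hdx]
    nlinarith [mul_nonneg hx.1 hy.1, mul_nonneg (mul_nonneg hx.1 hy.1) (sub_pos.mpr hxy).le,
      mul_nonneg hx.1 (sub_pos.mpr hxy).le, mul_nonneg hy.1 (sub_pos.mpr hxy).le,
      sub_pos.mpr hxy]
  refine ⟨hanti, fun x hx => ?_⟩
  rcases eq_or_lt_of_le hx.1 with h | h
  · simp [← h]
  · exact (hanti ⟨le_refl 0, hR.le⟩ hx h).le
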